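/- Let (Ω, μ) be a finite measure space with μ ≠ 0, let g : [0,1] × Ω → ℝ be measurable, bounded by a constant M, and such that t ↦ g(t, ω) is continuous for each ω, and let v : Ω → ℝ be bounded measurable. Define w_t(ω) := exp(∫₀ᵗ g(r, ω) dr), the normalized measures π_t := (w_t / ∫ w_t dμ) μ, and β(t) := ∫ v w_t dμ / ∫ w_t dμ. Then t ↦ β(t) is differentiable on (0,1) and for every t, β'(t) = ∫ v g(t, ·) dπ_t − (∫ v dπ_t)(∫ g(t, ·) dπ_t), i.e. the derivative equals the covariance of v and g(t, ·) under π_t. -/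

import Mathlib

open MeasureTheory

/-- The exponential tilt weight `w_t(ω) = exp(∫₀ᵗ g(r, ω) dr)`. -/
noncomputable def tiltWeight {Ω : Type*} (g : ℝ → Ω → ℝ) (t : ℝ) (ω : Ω) : ℝ :=
  Real.exp (∫ r in (0:ℝ)..t, g r ω)

/-- The normalized tilted measure `π_t = (w_t / ∫ w_t dμ) μ`. -/
noncomputable def tiltedMeasure {Ω : Type*} [MeasurableSpace Ω]
    (μ : Measure Ω) (g : ℝ → Ω → ℝ) (t : ℝ) : Measure Ω :=
  μ.withDensity fun ω =>
    ENNReal.ofReal (tiltWeight g t ω / ∫ ω', tiltWeight g t ω' ∂μ)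

section Aux

variable {Ω : Type*} [MeasurableSpace Ω]

lemma tiltWeight_measurable {g : ℝ → Ω → ℝ}
    (hgm : Measurable (Function.uncurry g)) (t : ℝ) :
    Measurable (tiltWeight g t) := by
  have h : ∀ a b : ℝ, Measurable fun ω => ∫ r in Set.Ioc a b, g r ω := by
    intro a b
    have hsm : StronglyMeasurable fun p : Ω × ℝ => g p.2 p.1 :=
      (hgm.comp measurable_swap).stronglyMeasurable
    exact hsm.integral_prod_right'.measurable
  have h2 : Measurable fun ω => ∫ r in (0:ℝ)..t, g r ω := by
    simp only [intervalIntegral]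
    exact (h 0 t).sub (h t 0)
  exact Real.measurable_exp.comp h2

lemma tilt_int_abs_le {g : ℝ → Ω → ℝ} {M : ℝ}
    (hgb : ∀ t ∈ Set.Icc (0:ℝ) 1, ∀ ω, |g t ω| ≤ M)
    {t : ℝ} (ht : t ∈ Set.Icc (0:ℝ) 1) (ω : Ω) :
    |∫ r in (0:ℝ)..t, g r ω| ≤ M := by
  have hM : 0 ≤ M := (abs_nonneg _).trans (hgb 0 ⟨le_refl _, zero_le_one⟩ ω)
  have hb : ∀ x ∈ Set.uIoc (0:ℝ) t, ‖g x ω‖ ≤ M := by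
    intro x hx
    rw [Set.uIoc_of_le ht.1] at hx
    exact hgb x ⟨le_of_lt hx.1, hx.2.trans ht.2⟩ ω
  have := intervalIntegral.norm_integral_le_of_norm_le_const hb
  have h2 : M * |t - 0| ≤ M := by
    rw [sub_zero, abs_of_nonneg ht.1]
    nlinarith [ht.1, ht.2]
  exact (this.trans h2)

lemma tiltWeight_le {g : ℝ → Ω → ℝ} {M : ℝ}
    (hgb : ∀ t ∈ Set.Icc (0:ℝ) 1, ∀ ω, |g t ω| ≤ M)
    {t : ℝ} (ht : t ∈ Set.Icc (0:ℝ) 1) (ω : Ω) :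
    tiltWeight g t ω ≤ Real.exp M :=
  Real.exp_le_exp.2 ((le_abs_self _).trans (tilt_int_abs_le hgb ht ω))

lemma le_tiltWeight {g : ℝ → Ω → ℝ} {M : ℝ}
    (hgb : ∀ t ∈ Set.Icc (0:ℝ) 1, ∀ ω, |g t ω| ≤ M)
    {t : ℝ} (ht : t ∈ Set.Icc (0:ℝ) 1) (ω : Ω) :
    Real.exp (-M) ≤ tiltWeight g t ω :=
  Real.exp_le_exp.2 (neg_le_of_abs_le (tilt_int_abs_le hgb ht ω))

lemma tilt_integrable (μ : Measure Ω) [IsFiniteMeasure μ] {g : ℝ → Ω → ℝ} {M : ℝ}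
    (hgm : Measurable (Function.uncurry g))
    (hgb : ∀ t ∈ Set.Icc (0:ℝ) 1, ∀ ω, |g t ω| ≤ M)
    {t : ℝ} (ht : t ∈ Set.Icc (0:ℝ) 1)
    (f : Ω → ℝ) (hfm : Measurable f) (Cf : ℝ) (hfb : ∀ ω, |f ω| ≤ Cf) :
    Integrable (fun ω => f ω * tiltWeight g t ω) μ := by
  refine Integrable.mono' (integrable_const (Cf * Real.exp M))
    ((hfm.mul (tiltWeight_measurable hgm t)).aestronglyMeasurable)
    (Filter.Eventually.of_forall fun ω => ?_)
  have h1 : 0 ≤ tiltWeight g t ω := le_of_lt (Real.exp_pos _)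
  calc ‖f ω * tiltWeight g t ω‖ = |f ω| * tiltWeight g t ω := by
        rw [Real.norm_eq_abs, abs_mul, abs_of_nonneg h1]
    _ ≤ Cf * Real.exp M :=
        mul_le_mul (hfb ω) (tiltWeight_le hgb ht ω) h1 ((abs_nonneg _).trans (hfb ω))

lemma hasDerivAt_integral_tilt (μ : Measure Ω) [IsFiniteMeasure μ]
    (g : ℝ → Ω → ℝ) (hgm : Measurable (Function.uncurry g))
    (M : ℝ) (hgb : ∀ t ∈ Set.Icc (0:ℝ) 1, ∀ ω, |g t ω| ≤ M)
    (hgc : ∀ ω, ContinuousOn (fun t => g t ω) (Set.Icc (0:ℝ) 1))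
    (f : Ω → ℝ) (hfm : Measurable f) (Cf : ℝ) (hfb : ∀ ω, |f ω| ≤ Cf)
    {t : ℝ} (ht : t ∈ Set.Ioo (0:ℝ) 1) :
    HasDerivAt (fun τ => ∫ ω, f ω * tiltWeight g τ ω ∂μ)
      (∫ ω, f ω * g t ω * tiltWeight g t ω ∂μ) t := by
  set ε : ℝ := min t (1 - t) with hε
  have hε0 : 0 < ε := lt_min ht.1 (by linarith [ht.2])
  have hball : Metric.ball t ε ⊆ Set.Ioo (0:ℝ) 1 := by
    intro x hx
    rw [Real.ball_eq_Ioo] at hx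
    have h1 := min_le_left t (1 - t)
    have h2 := min_le_right t (1 - t)
    exact ⟨by linarith [hx.1], by linarith [hx.2]⟩
  have hgt : ∀ τ : ℝ, Measurable fun ω => g τ ω :=
    fun τ => hgm.comp (measurable_const.prodMk measurable_id)
  have key := hasDerivAt_integral_of_dominated_loc_of_deriv_le (μ := μ)
    (F := fun τ ω => f ω * tiltWeight g τ ω)
    (F' := fun τ ω => f ω * g τ ω * tiltWeight g τ ω)
    (bound := fun _ => Cf * M * Real.exp M) (Metric.ball_mem_nhds t hε0)
    (Filter.Eventually.of_forall fun τ =>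
      ((hfm.mul (tiltWeight_measurable hgm τ)).aestronglyMeasurable))
    (tilt_integrable μ hgm hgb (Set.mem_Icc_of_Ioo ht) f hfm Cf hfb)
    (((hfm.mul (hgt t)).mul (tiltWeight_measurable hgm t)).aestronglyMeasurable)
    ?_ (integrable_const _) ?_
  · exact key.2
  · -- bound
    refine Filter.Eventually.of_forall fun ω => fun τ hτ => ?_
    have hτ1 : τ ∈ Set.Icc (0:ℝ) 1 := Set.mem_Icc_of_Ioo (hball hτ)
    have h1 : 0 ≤ tiltWeight g τ ω := le_of_lt (Real.exp_pos _)
    have hM : 0 ≤ M := (abs_nonneg _).trans (hgb 0 ⟨le_refl _, zero_le_one⟩ ω)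
    have hCf : 0 ≤ Cf := (abs_nonneg _).trans (hfb ω)
    calc ‖f ω * g τ ω * tiltWeight g τ ω‖
        = |f ω| * |g τ ω| * tiltWeight g τ ω := by
          rw [Real.norm_eq_abs, abs_mul, abs_mul, abs_of_nonneg h1]
      _ ≤ Cf * M * Real.exp M := by
          apply mul_le_mul (mul_le_mul (hfb ω) (hgb τ hτ1 ω) (abs_nonneg _) hCf)
            (tiltWeight_le hgb hτ1 ω) h1 (by positivity)
  · -- differentiability
    refine Filter.Eventually.of_forall fun ω => fun τ hτ => ?_
    have hτo : τ ∈ Set.Ioo (0:ℝ) 1 := hball hτ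
    have hIcc : Set.Icc (0:ℝ) 1 ∈ nhds τ := Icc_mem_nhds hτo.1 hτo.2
    have hint : IntervalIntegrable (fun r => g r ω) volume 0 τ := by
      apply ContinuousOn.intervalIntegrable
      apply (hgc ω).mono
      rw [Set.uIcc_of_le (le_of_lt hτo.1)]
      exact Set.Icc_subset_Icc le_rfl (le_of_lt hτo.2)
    have hI : HasDerivAt (fun τ' => ∫ r in (0:ℝ)..τ', g r ω) (g τ ω) τ := by
      apply intervalIntegral.integral_hasDerivAt_right hint
      · exact ⟨Set.Icc 0 1, hIcc, ((hgc ω).aestronglyMeasurable measurableSet_Icc)⟩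
      · exact (hgc ω).continuousAt hIcc
    have := (hI.exp).const_mul (f ω)
    refine HasDerivAt.congr_deriv this (Eq.symm ?_)
    show f ω * g τ ω * tiltWeight g τ ω = _
    simp only [tiltWeight]
    ring

lemma integral_tiltedMeasure (μ : Measure Ω) [IsFiniteMeasure μ]
    {g : ℝ → Ω → ℝ} (hgm : Measurable (Function.uncurry g)) (t : ℝ) (h : Ω → ℝ) :
    ∫ ω, h ω ∂(tiltedMeasure μ g t)
      = (∫ ω, h ω * tiltWeight g t ω ∂μ) / ∫ ω, tiltWeight g t ω ∂μ := by
  set D : ℝ := ∫ ω, tiltWeight g t ω ∂μ with hD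
  have hD0 : 0 ≤ D := integral_nonneg fun ω => le_of_lt (Real.exp_pos _)
  have hmeas : Measurable fun ω => (tiltWeight g t ω / D).toNNReal :=
    measurable_real_toNNReal.comp ((tiltWeight_measurable hgm t).div_const D)
  have : tiltedMeasure μ g t
      = μ.withDensity fun ω => ((tiltWeight g t ω / D).toNNReal : ENNReal) := by
    simp only [tiltedMeasure, ENNReal.ofReal, hD]
  rw [this, integral_withDensity_eq_integral_smul hmeas]
  have heq : (fun ω => (tiltWeight g t ω / D).toNNReal • h ω)
      = fun ω => (h ω * tiltWeight g t ω) / D := by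
    funext ω
    have hw : 0 ≤ tiltWeight g t ω / D := div_nonneg (le_of_lt (Real.exp_pos _)) hD0
    simp only [NNReal.smul_def, Real.coe_toNNReal _ hw, smul_eq_mul]
    ring
  rw [heq, integral_div]

end Aux

/-- Covariance evolution of the tilted regression target: with
`β(t) = (∫ v w_t dμ)/(∫ w_t dμ)`, the map `t ↦ β(t)` is differentiable on
`(0,1)` with derivative
`β'(t) = ∫ v g(t,·) dπ_t − (∫ v dπ_t)(∫ g(t,·) dπ_t)`, i.e. the covariance of
`v` and `g(t,·)` under the normalized tilted measure `π_t`. -/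
theorem tilted_field_covariance_ode
    {Ω : Type*} [MeasurableSpace Ω]
    (μ : Measure Ω) [IsFiniteMeasure μ] (hμ : μ ≠ 0)
    (g : ℝ → Ω → ℝ) (hgm : Measurable (Function.uncurry g))
    (M : ℝ) (hgb : ∀ t ∈ Set.Icc (0:ℝ) 1, ∀ ω, |g t ω| ≤ M)
    (hgc : ∀ ω, ContinuousOn (fun t => g t ω) (Set.Icc (0:ℝ) 1))
    (v : Ω → ℝ) (hvm : Measurable v) (Cv : ℝ) (hvb : ∀ ω, |v ω| ≤ Cv) :
    ∀ t ∈ Set.Ioo (0:ℝ) 1,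
      HasDerivAt
        (fun τ => (∫ ω, v ω * tiltWeight g τ ω ∂μ)
          / ∫ ω, tiltWeight g τ ω ∂μ)
        ((∫ ω, v ω * g t ω ∂(tiltedMeasure μ g t))
          - (∫ ω, v ω ∂(tiltedMeasure μ g t))
            * ∫ ω, g t ω ∂(tiltedMeasure μ g t)) t := by
  intro t ht
  have htI : t ∈ Set.Icc (0:ℝ) 1 := Set.mem_Icc_of_Ioo ht
  -- derivative of the numerator
  have hN := hasDerivAt_integral_tilt μ g hgm M hgb hgc v hvm Cv hvb ht
  -- derivative of the denominator
  have hD' := hasDerivAt_integral_tilt μ g hgm M hgb hgc (fun _ => 1) measurable_const 1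
    (fun ω => by norm_num) ht
  simp only [one_mul] at hD'
  -- positivity of the denominator
  have hDpos : 0 < ∫ ω, tiltWeight g t ω ∂μ := by
    have hμpos : 0 < (μ Set.univ).toReal := by
      refine ENNReal.toReal_pos ?_ (measure_ne_top μ _)
      simpa [Measure.measure_univ_pos] using hμ
    have hint : Integrable (tiltWeight g t) μ := by
      have := tilt_integrable μ hgm hgb htI (fun _ => 1) measurable_const 1
        (fun ω => by norm_num)
      simpa [one_mul] using this
    have : (∫ _ω, Real.exp (-M) ∂μ) ≤ ∫ ω, tiltWeight g t ω ∂μ :=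
      integral_mono (integrable_const _) hint (fun ω => le_tiltWeight hgb htI ω)
    rw [integral_const, smul_eq_mul, measureReal_def] at this
    have : 0 < (μ Set.univ).toReal * Real.exp (-M) :=
      mul_pos hμpos (Real.exp_pos _)
    linarith
  have hD0 : (∫ ω, tiltWeight g t ω ∂μ) ≠ 0 := ne_of_gt hDpos
  have hquot := hN.div hD' hD0
  refine HasDerivAt.congr_deriv hquot (Eq.symm ?_)
  rw [integral_tiltedMeasure μ hgm t, integral_tiltedMeasure μ hgm t,
    integral_tiltedMeasure μ hgm t]
  have h1 : (fun ω => v ω * g t ω * tiltWeight g t ω)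
      = fun ω => v ω * g t ω * tiltWeight g t ω := rfl
  field_simp
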